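/- The classical period of a Laurent polynomial in two variables is invariant under algebraic mutation: let φ = φ_{v,F} be an algebraic mutation and let f, g be Laurent polynomials with g = φ*f. Then const(f^d) = const(g^d) for every d ≥ 0, i.e. π_f(t) = π_g(t). -/

import Mathlib

noncomputable section
open Pointwise

abbrev M : Type := ℤ × ℤ
abbrev NN : Type := ℤ × ℤ

def toR (m : M) : ℝ × ℝ := ((m.1 : ℝ), (m.2 : ℝ))
def pairZ (u : NN) (m : M) : ℤ := u.1 * m.1 + u.2 * m.2
def pairR (u : NN) (x : ℝ × ℝ) : ℝ := u.1 * x.1 + u.2 * x.2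
def IsPrimitive (u : ℤ × ℤ) : Prop := Int.gcd u.1 u.2 = 1

/-- A full-dimensional convex lattice polygon in `ℝ²`. -/
def IsLatticePolygon (P : Set (ℝ × ℝ)) : Prop :=
  (∃ S : Finset M, P = convexHull ℝ (toR '' (S : Set M))) ∧ (interior P).Nonempty

/-- A Fano polygon: the origin is in the strict interior and all vertices are primitive. -/
def IsFanoPolygon (P : Set (ℝ × ℝ)) : Prop :=
  IsLatticePolygon P ∧ (0 : ℝ × ℝ) ∈ interior P ∧
  ∀ x ∈ Set.extremePoints ℝ P, ∃ m : M, toR m = x ∧ IsPrimitive m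

/-- The face of `P` cut out by the inward normal `u` at height `h`. -/
def edgeSet (P : Set (ℝ × ℝ)) (u : NN) (h : ℤ) : Set (ℝ × ℝ) :=
  {x ∈ P | pairR u x = -(h : ℝ)}

/-- `(u,h)` is the data of an edge of `P`: `u` a primitive inward normal, `h = h_E` the
lattice height, and the corresponding face is one-dimensional (not a single point). -/
def IsEdge (P : Set (ℝ × ℝ)) (u : NN) (h : ℤ) : Prop :=
  IsPrimitive u ∧ 0 < h ∧ (∀ x ∈ P, -(h : ℝ) ≤ pairR u x) ∧ ¬ (edgeSet P u h).Subsingleton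

def latticePts (E : Set (ℝ × ℝ)) : Set M := {m : M | toR m ∈ E}

/-- Lattice length of the edge of `P` with data `(u,h)`: number of lattice points minus one. -/
def latLen (P : Set (ℝ × ℝ)) (u : NN) (h : ℤ) : ℕ := (latticePts (edgeSet P u h)).ncard - 1

/-- A T-polygon: a Fano polygon such that `h_E ∣ ℓ_E` for every edge `E`. -/
def IsTPolygon (P : Set (ℝ × ℝ)) : Prop :=
  IsFanoPolygon P ∧ ∀ u h, IsEdge P u h → h.toNat ∣ latLen P u h

/-- The slice of `P` at height `h` with respect to `v`. -/
def sliceAt (P : Set (ℝ × ℝ)) (v : NN) (h : ℤ) : Set (ℝ × ℝ) := {x ∈ P | pairR v x = (h : ℝ)}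

def IsPolytope (Q : Set (ℝ × ℝ)) : Prop :=
  ∃ S : Finset (ℝ × ℝ), Q = convexHull ℝ (S : Set (ℝ × ℝ))

/-- Mutation data: `v` primitive in the dual lattice, `F` a lattice segment or point in `v^⊥`. -/
def IsMutationData (v : NN) (F : Set (ℝ × ℝ)) : Prop :=
  IsPrimitive v ∧ ∃ a b : M, pairZ v a = 0 ∧ pairZ v b = 0 ∧ F = segment ℝ (toR a) (toR b)

/-- `P` is mutable with respect to `(v,F)` (via the witnesses `G h`), and
`P' = mut_{v,F}(P)` is the corresponding mutation. -/
def IsMutationOf (v : NN) (F : Set (ℝ × ℝ)) (P P' : Set (ℝ × ℝ)) : Prop :=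
  IsMutationData v F ∧
  ∃ G : ℤ → Set (ℝ × ℝ),
    (∀ h : ℤ, h < 0 → IsPolytope (G h) ∧ sliceAt P v h = G h + ((-h : ℤ) : ℝ) • F) ∧
    P' = convexHull ℝ ((⋃ h : ℤ, ⋃ _ : h < 0, G h) ∪
      (⋃ h : ℤ, ⋃ _ : 0 ≤ h, (sliceAt P v h + (h : ℝ) • F)))

def IsPolyMutation (P P' : Set (ℝ × ℝ)) : Prop := ∃ v F, IsMutationOf v F P P'

def unimodMap (a b c d : ℤ) (x : ℝ × ℝ) : ℝ × ℝ :=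
  ((a : ℝ) * x.1 + (b : ℝ) * x.2, (c : ℝ) * x.1 + (d : ℝ) * x.2)

/-- `P'` is the image of `P` under a transformation in `GL₂(ℤ)`. -/
def IsUnimodularImage (P P' : Set (ℝ × ℝ)) : Prop :=
  ∃ a b c d : ℤ, (a * d - b * c = 1 ∨ a * d - b * c = -1) ∧ P' = unimodMap a b c d '' P

/-- Laurent polynomials in two variables. -/
abbrev LP := AddMonoidAlgebra ℂ M

instance : IsDomain LP := NoZeroDivisors.to_isDomain _

/-- The field of fractions `ℂ(x,y)`. -/
abbrev K := FractionRing LP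

def ι : LP →+* K := algebraMap LP K

/-- The monomial `x^m`. -/
def mono (m : M) : LP := AddMonoidAlgebra.single m 1

/-- The coefficient of the constant monomial. -/
def constTerm (f : LP) : ℂ := f.coeff 0

/-- The Newton polygon of a Laurent polynomial. -/
def Newt (f : LP) : Set (ℝ × ℝ) := convexHull ℝ (toR '' (f.coeff.support : Set M))

/-- `φ` is the algebraic mutation `φ_{v,F}` of the field of fractions: the (ℂ-linear) field
automorphism determined by `x^m ↦ x^m F^{⟨m,v⟩}`, where `v` is primitive and all monomials
of the factor `F` lie in `v^⊥`. -/
def IsAlgMutation (v : NN) (F : LP) (φ : K ≃+* K) : Prop :=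
  IsPrimitive v ∧ F ≠ 0 ∧ (∀ m ∈ F.coeff.support, pairZ v m = 0) ∧
  (∀ c : ℂ, φ (ι (AddMonoidAlgebra.single 0 c)) = ι (AddMonoidAlgebra.single 0 c)) ∧
  (∀ m : M, φ (ι (mono m)) = ι (mono m) * (ι F) ^ (pairZ v m))

/-- One mutation step between Laurent polynomials: `g = φ*f` is again a Laurent polynomial. -/
def MutStep (f g : LP) : Prop :=
  ∃ (v : NN) (F : LP) (φ : K ≃+* K), IsAlgMutation v F φ ∧ φ (ι f) = ι g

/-- Mutation equivalence: a finite chain of algebraic mutations all of whose intermediate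
pullbacks are Laurent polynomials. -/
def MutEquiv : LP → LP → Prop := Relation.ReflTransGen MutStep


section AuxMutation

open Finsupp AddMonoidAlgebra

lemma pairZ_add' (u : NN) (a b : M) : pairZ u (a + b) = pairZ u a + pairZ u b := by
  simp only [pairZ, Prod.fst_add, Prod.snd_add]; ring

lemma pairZ_zero' (u : NN) : pairZ u 0 = 0 := by
  simp [pairZ]

open Classical in
/-- The grade-0 projection. -/
def gr0 (v : NN) (a : LP) : LP := AddMonoidAlgebra.ofCoeff (Finsupp.filter (fun m => pairZ v m = 0) a.coeff)

open Classical in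
lemma gr0_add (v : NN) (a b : LP) : gr0 v (a + b) = gr0 v a + gr0 v b := by
  ext m
  show Finsupp.filter _ (a.coeff + b.coeff) m = (Finsupp.filter _ a.coeff + Finsupp.filter _ b.coeff) m
  rw [Finsupp.add_apply]
  by_cases h : pairZ v m = 0
  · rw [Finsupp.filter_apply_pos (fun n => pairZ v n = 0) (a.coeff + b.coeff) h,
        Finsupp.filter_apply_pos (fun n => pairZ v n = 0) a.coeff h,
        Finsupp.filter_apply_pos (fun n => pairZ v n = 0) b.coeff h, Finsupp.add_apply]
  · rw [Finsupp.filter_apply_neg (fun n => pairZ v n = 0) (a.coeff + b.coeff) h,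
        Finsupp.filter_apply_neg (fun n => pairZ v n = 0) a.coeff h,
        Finsupp.filter_apply_neg (fun n => pairZ v n = 0) b.coeff h, add_zero]

open Classical in
lemma gr0_zero (v : NN) : gr0 v 0 = 0 := by
  simp [gr0, Finsupp.filter_zero]

open Classical in
lemma gr0_sum (v : NN) {ι' : Type*} (s : Finset ι') (f : ι' → LP) :
    gr0 v (∑ i ∈ s, f i) = ∑ i ∈ s, gr0 v (f i) := by
  induction s using Finset.cons_induction with
  | empty => simp [gr0_zero]
  | cons i s hi ih => rw [Finset.sum_cons, Finset.sum_cons, gr0_add, ih]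

open Classical in
lemma gr0_single_pos (v : NN) (m : M) (c : ℂ) (h : pairZ v m = 0) :
    gr0 v (AddMonoidAlgebra.single m c) = AddMonoidAlgebra.single m c :=
  congrArg AddMonoidAlgebra.ofCoeff (Finsupp.filter_single_of_pos _ h)

open Classical in
lemma gr0_single_neg (v : NN) (m : M) (c : ℂ) (h : ¬ pairZ v m = 0) :
    gr0 v (AddMonoidAlgebra.single m c) = 0 :=
  congrArg AddMonoidAlgebra.ofCoeff (Finsupp.filter_single_of_neg _ h)

open Classical in
lemma gr0_apply_zero (v : NN) (a : LP) : (gr0 v a).coeff 0 = a.coeff 0 :=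
  Finsupp.filter_apply_pos _ _ (pairZ_zero' v)

open Classical in
/-- Monomials occurring in `single m c * b` with `b` of grade zero have grade `pairZ v m`. -/
lemma grade_single_mul (v : NN) (b : LP) (hb : ∀ n ∈ b.coeff.support, pairZ v n = 0)
    (m : M) (c : ℂ) (x : M) (hx : (AddMonoidAlgebra.single m c * b : LP).coeff x ≠ 0) :
    pairZ v x = pairZ v m := by
  rw [AddMonoidAlgebra.coeff_single_mul_apply] at hx
  have hb' : b.coeff (-m + x) ≠ 0 := fun h => hx (by rw [h, mul_zero])
  have h0 : pairZ v (-m + x) = 0 := hb _ (Finsupp.mem_support_iff.mpr hb')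
  have hmx : m + (-m + x) = x := by abel
  calc pairZ v x = pairZ v (m + (-m + x)) := by rw [hmx]
    _ = pairZ v m + pairZ v (-m + x) := pairZ_add' v _ _
    _ = pairZ v m := by rw [h0, add_zero]

open Classical in
/-- Grade-0 projection commutes with multiplication by a grade-0 element. -/
lemma gr0_mul_grade0 (v : NN) (b : LP) (hb : ∀ n ∈ b.coeff.support, pairZ v n = 0) (a : LP) :
    gr0 v (a * b) = gr0 v a * b := by
  induction a using AddMonoidAlgebra.induction_linear with
  | zero =>
      rw [zero_mul, gr0_zero, zero_mul]
  | add f g hf hg =>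
      rw [add_mul, gr0_add, hf, hg, gr0_add, add_mul]
  | single m c =>
      by_cases hm : pairZ v m = 0
      · rw [gr0_single_pos v m c hm, ← AddMonoidAlgebra.coeff_inj]
        show Finsupp.filter _ _ = _
        rw [Finsupp.filter_eq_self_iff]
        intro x hx
        rw [grade_single_mul v b hb m c x hx, hm]
      · rw [gr0_single_neg v m c hm, zero_mul, ← AddMonoidAlgebra.coeff_inj]
        show Finsupp.filter _ _ = (0 : M →₀ ℂ)
        rw [Finsupp.filter_eq_zero_iff]
        intro x hx
        by_contra h
        exact hm (by rw [← grade_single_mul v b hb m c x h, hx])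

lemma grade0_pow (v : NN) (F : LP) (hF : ∀ n ∈ F.coeff.support, pairZ v n = 0) (k : ℕ) :
    ∀ n ∈ (F ^ k).coeff.support, pairZ v n = 0 := by
  induction k with
  | zero =>
      intro n hn
      rw [pow_zero, AddMonoidAlgebra.one_def] at hn
      have h1 := Finsupp.support_single_subset hn
      rw [Finset.mem_singleton] at h1
      rw [h1, pairZ_zero']
  | succ k ih =>
      intro n hn
      rw [pow_succ] at hn
      classical
      have h2 := AddMonoidAlgebra.support_coeff_mul_subset (F ^ k) F hn
      rw [Finset.mem_add] at h2
      obtain ⟨a, ha, b, hb, rfl⟩ := h2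
      rw [pairZ_add', ih a ha, hF b hb, add_zero]

lemma iota_injective : Function.Injective ι :=
  IsFractionRing.injective LP K

set_option synthInstance.maxHeartbeats 1000000 in
set_option maxHeartbeats 1000000 in
/-- Key lemma: if the pullback of a mutation is a Laurent polynomial, constant terms agree. -/
lemma constTerm_eq_of_mut (v : NN) (F : LP) (φ : K ≃+* K) (hφ : IsAlgMutation v F φ)
    (p q : LP) (hpq : φ (ι p) = ι q) : constTerm p = constTerm q := by
  obtain ⟨hv, hF0, hFsupp, hc, hm⟩ := hφ
  have hιF : ι F ≠ 0 := fun h => hF0 (iota_injective (by rw [h, map_zero]))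
  set N : ℕ := p.coeff.support.sup fun m => (-(pairZ v m)).toNat with hNdef
  have hN : ∀ m ∈ p.coeff.support, 0 ≤ pairZ v m + (N : ℤ) := by
    intro m hmem
    have h1 : (-(pairZ v m)).toNat ≤ N := Finset.le_sup (f := fun m => (-(pairZ v m)).toNat) hmem
    have h2 : -(pairZ v m) ≤ ((-(pairZ v m)).toNat : ℤ) := Int.self_le_toNat _
    have h3 : (((-(pairZ v m)).toNat : ℕ) : ℤ) ≤ (N : ℤ) := Int.ofNat_le.mpr h1
    omega
  set e : M → ℕ := fun m => (pairZ v m + (N : ℤ)).toNat with hedef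
  -- term computation in K
  have hterm : ∀ m ∈ p.coeff.support,
      φ (ι (AddMonoidAlgebra.single m (p.coeff m))) * (ι F) ^ N
        = ι (AddMonoidAlgebra.single m (p.coeff m) * F ^ (e m)) := by
    intro m hmem
    have hsplit : (AddMonoidAlgebra.single (0 : M) (p.coeff m) * mono m : LP)
        = AddMonoidAlgebra.single m (p.coeff m) := by
      rw [mono, AddMonoidAlgebra.single_mul_single, zero_add, mul_one]
    have hz : ((e m : ℕ) : ℤ) = pairZ v m + (N : ℤ) := Int.toNat_of_nonneg (hN m hmem)
    calc φ (ι (AddMonoidAlgebra.single m (p.coeff m))) * (ι F) ^ N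
        = φ (ι (AddMonoidAlgebra.single (0 : M) (p.coeff m)) * ι (mono m)) * (ι F) ^ N := by
          rw [← map_mul, hsplit]
      _ = ι (AddMonoidAlgebra.single (0 : M) (p.coeff m)) * (ι (mono m) * (ι F) ^ (pairZ v m))
            * (ι F) ^ N := by rw [map_mul, hc, hm]
      _ = ι (AddMonoidAlgebra.single (0 : M) (p.coeff m)) * ι (mono m)
            * ((ι F) ^ (pairZ v m) * (ι F) ^ ((N : ℤ))) := by
          rw [zpow_natCast]; ring
      _ = ι (AddMonoidAlgebra.single (0 : M) (p.coeff m)) * ι (mono m)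
            * (ι F) ^ ((e m : ℤ)) := by
          rw [← zpow_add₀ hιF, hz]
      _ = ι (AddMonoidAlgebra.single (0 : M) (p.coeff m)) * ι (mono m) * ι (F ^ (e m)) := by
          rw [zpow_natCast, map_pow]
      _ = ι (AddMonoidAlgebra.single m (p.coeff m) * F ^ (e m)) := by
          rw [← hsplit, map_mul, map_mul]
  have hpsum : (∑ m ∈ p.coeff.support, (AddMonoidAlgebra.single m (p.coeff m) : LP)) = p := by
    exact AddMonoidAlgebra.sum_coeff_single p
  -- main identity in LP
  have hmain : q * F ^ N = ∑ m ∈ p.coeff.support,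
      AddMonoidAlgebra.single m (p.coeff m) * F ^ (e m) := by
    apply iota_injective
    rw [map_mul, map_pow, ← hpq]
    conv_lhs => rw [← hpsum]
    rw [map_sum, map_sum, map_sum, Finset.sum_mul]
    exact Finset.sum_congr rfl hterm
  -- apply grade-0 projection
  have hFN : ∀ k : ℕ, ∀ n ∈ (F ^ k).coeff.support, pairZ v n = 0 := grade0_pow v F hFsupp
  have hleft : gr0 v (q * F ^ N) = gr0 v q * F ^ N := gr0_mul_grade0 v (F ^ N) (hFN N) q
  have hright : gr0 v (∑ m ∈ p.coeff.support,
        (AddMonoidAlgebra.single m (p.coeff m) * F ^ (e m) : LP))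
      = gr0 v p * F ^ N := by
    rw [gr0_sum]
    have hcongr : ∀ m ∈ p.coeff.support,
        gr0 v (AddMonoidAlgebra.single m (p.coeff m) * F ^ (e m) : LP)
        = gr0 v (AddMonoidAlgebra.single m (p.coeff m)) * F ^ N := by
      intro m hmem
      rw [gr0_mul_grade0 v (F ^ (e m)) (hFN (e m))]
      by_cases hm0 : pairZ v m = 0
      · have heN : e m = N := by simp [hedef, hm0]
        rw [heN]
      · rw [gr0_single_neg v m _ hm0, zero_mul, zero_mul]
    rw [Finset.sum_congr rfl hcongr, ← Finset.sum_mul, ← gr0_sum, hpsum]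
  have hcancel : gr0 v q = gr0 v p := by
    have hFN0 : (F ^ N : LP) ≠ 0 := pow_ne_zero N hF0
    have heq : gr0 v q * F ^ N = gr0 v p * F ^ N := by
      rw [← hleft, hmain, hright]
    exact mul_right_cancel₀ hFN0 heq
  show p.coeff 0 = q.coeff 0
  rw [← gr0_apply_zero v p, ← gr0_apply_zero v q, hcancel]

end AuxMutation

/-- The classical period of a Laurent polynomial in two variables is invariant
under algebraic mutation: if `φ = φ_{v,F}` is an algebraic mutation and `g = φ*f` is again a
Laurent polynomial, then `const(f^d) = const(g^d)` for all `d ≥ 0`, i.e. `π_f(t) = π_g(t)`. -/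
theorem classical_period_mutation_invariant (f g F : LP) (v : NN) (φ : K ≃+* K)
    (hφ : IsAlgMutation v F φ)
    (hg : φ (ι f) = ι g) :
    ∀ d : ℕ, constTerm (f ^ d) = constTerm (g ^ d) := by
  intro d
  apply constTerm_eq_of_mut v F φ hφ
  rw [map_pow, map_pow, hg, map_pow]
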